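/- For any nonnegative integer α, the operator identity (∏_{j=1}^r y_j)^{-α} ∘ (∏_{j=1}^r D_j) ∘ (∏_{j=1}^r y_j)^{1+α} = ∏_{j=1}^r (U_j + α) holds, as operators on polynomials in y₁,…,y_r. -/

import Mathlib

open MvPolynomial Finset

noncomputable section

abbrev Pol (r : ℕ) : Type := MvPolynomial (Fin r) ℂ

/-- Multiplication operator by a polynomial. -/
def mulOp {r : ℕ} (p : Pol r) : Module.End ℂ (Pol r) := LinearMap.mulLeft ℂ p

/-- Partial derivative operator. -/
def pd {r : ℕ} (j : Fin r) : Module.End ℂ (Pol r) := (pderiv j).toLinearMap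

/-- The transposition operator `s_{ij}` swapping the variables `i` and `j`. -/
def swOp {r : ℕ} (i j : Fin r) : Module.End ℂ (Pol r) :=
  (rename ⇑(Equiv.swap i j) : Pol r →ₐ[ℂ] Pol r).toLinearMap

/-- Ordered product `f 0 * f 1 * ⋯ * f (r-1)` of operators. -/
def opProd {r : ℕ} (f : Fin r → Module.End ℂ (Pol r)) : Module.End ℂ (Pol r) :=
  ((List.finRange r).map f).prod

/-- The type-A Dunkl operator `D_j = ∂_j + (a/2) ∑_{i ≠ j} q i j`, where `q i j` is the
difference-quotient operator `f ↦ (y_j - y_i)⁻¹ (1 - s_{ij}) f` (given as data, pinned down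
by the divisibility specification `DunklQuotA`). -/
def dunklA {r : ℕ} (a : ℂ) (q : Fin r → Fin r → Module.End ℂ (Pol r)) (j : Fin r) :
    Module.End ℂ (Pol r) :=
  pd j + (a / 2) • ∑ i ∈ Finset.univ.erase j, q i j

/-- Specification: `q i j` is division of `(1 - s_{ij}) f` by `y_j - y_i`. -/
def DunklQuotA {r : ℕ} (q : Fin r → Fin r → Module.End ℂ (Pol r)) : Prop :=
  ∀ i j : Fin r, i ≠ j → ∀ f : Pol r,
    (X j - X i) * q i j f = f - swOp i j f

/-- The type-A Cherednik operator `U_j = D_j y_j - (a/2) ∑_{i<j} s_{ij}`. -/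
def cherednikA {r : ℕ} (a : ℂ) (q : Fin r → Fin r → Module.End ℂ (Pol r)) (j : Fin r) :
    Module.End ℂ (Pol r) :=
  dunklA a q j * mulOp (X j) - (a / 2) • ∑ i ∈ Finset.univ.filter (fun i => i < j), swOp i j

-- ### auxiliary lemmas

namespace DunklAux

variable {r : ℕ}

lemma mulOp_apply (p f : Pol r) : mulOp p f = p * f := rfl

lemma swOp_mul (i j : Fin r) (p f : Pol r) :
    swOp i j (p * f) = swOp i j p * swOp i j f := map_mul (rename ⇑(Equiv.swap i j)) p f

lemma q_comm {q : Fin r → Fin r → Module.End ℂ (Pol r)} (hq : DunklQuotA q)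
    {i j : Fin r} (hij : i ≠ j) {g h : Pol r}
    (hg : g - swOp i j g = (X j - X i) * h) (f : Pol r) :
    q i j (g * f) = g * q i j f + h * swOp i j f := by
  have hx : (X j - X i : Pol r) ≠ 0 := sub_ne_zero.2 fun he => hij.symm (X_injective he)
  apply mul_left_cancel₀ hx
  have h1 := hq i j hij f
  have h2 := hq i j hij (g * f)
  rw [h2, swOp_mul]
  linear_combination (-g) * h1 + swOp i j f * hg

lemma filter_le_eq (j : Fin r) :
    univ.filter (· ≤ j) = insert j (univ.filter (· < j)) := by
  ext m
  simp [le_iff_lt_or_eq, or_comm]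

lemma prod_le_eq (j : Fin r) :
    (∏ m ∈ univ.filter (· ≤ j), X m : Pol r) = X j * ∏ m ∈ univ.filter (· < j), X m := by
  rw [filter_le_eq, Finset.prod_insert (by simp)]

lemma prod_univ_eq (j : Fin r) :
    (∏ m, X m : Pol r) = X j * ∏ m ∈ univ.erase j, X m :=
  (Finset.mul_prod_erase univ X (mem_univ j)).symm

lemma pderiv_prod_ne (j : Fin r) (s : Finset (Fin r)) (hs : j ∉ s) :
    pderiv j (∏ m ∈ s, (X m : Pol r)) = 0 := by
  refine Finset.prod_induction _ (fun p => pderiv j p = 0)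
    (fun p q' hp hq' => by rw [pderiv_mul, hp, hq']; ring) (by simp)
    (fun m hm => ?_)
  exact pderiv_X_of_ne (fun h => hs (h ▸ hm))

lemma pderiv_pow_zero {p : Pol r} {j : Fin r} (h : pderiv j p = 0) (n : ℕ) :
    pderiv j (p ^ n) = 0 := by
  induction n with
  | zero => simp
  | succ n ih => rw [pow_succ, pderiv_mul, h, ih]; ring

lemma pderiv_X_pow (j : Fin r) (n : ℕ) :
    pderiv j ((X j : Pol r) ^ (n + 1)) = ((n : Pol r) + 1) * X j ^ n := by
  induction n with
  | zero => simp
  | succ n ih =>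
    rw [pow_succ _ (n + 1), pderiv_mul, ih, pderiv_X_self]
    push_cast
    ring

lemma swap_le {i j m : Fin r} (hij : i < j) (hm : m ≤ j) : Equiv.swap i j m ≤ j := by
  rcases eq_or_ne m i with rfl | h1
  · rw [Equiv.swap_apply_left]
  rcases eq_or_ne m j with rfl | h2
  · rw [Equiv.swap_apply_right]; exact hij.le
  · rw [Equiv.swap_apply_of_ne_of_ne h1 h2]; exact hm

lemma rename_prod (σ : Fin r → Fin r) (s : Finset (Fin r)) :
    rename σ (∏ m ∈ s, (X m : Pol r)) = ∏ m ∈ s, (X (σ m) : Pol r) := by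
  rw [map_prod]
  exact Finset.prod_congr rfl fun m _ => rename_X σ m

lemma swOp_P (i j : Fin r) : swOp i j (∏ m, X m : Pol r) = ∏ m, X m := by
  show rename _ _ = _
  rw [rename_prod]
  exact Equiv.prod_comp (Equiv.swap i j) X

lemma swOp_Q_lt {i j : Fin r} (hij : i < j) (α : ℕ) :
    swOp i j ((∏ m ∈ univ.filter (· ≤ j), X m) * (∏ m, X m) ^ α : Pol r)
      = (∏ m ∈ univ.filter (· ≤ j), X m) * (∏ m, X m) ^ α := by
  have h1 : swOp i j ((∏ m, X m : Pol r) ^ α) = (∏ m, X m) ^ α := by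
    show rename ⇑(Equiv.swap i j) ((∏ m, X m : Pol r) ^ α) = _
    rw [map_pow, show rename ⇑(Equiv.swap i j) (∏ m, X m : Pol r) = ∏ m, X m from swOp_P i j]
  rw [swOp_mul, h1]
  congr 1
  show rename _ _ = _
  rw [rename_prod]
  refine Finset.prod_bijective (Equiv.swap i j) (Equiv.bijective _) (fun m => ?_) fun m _ => rfl
  simp only [mem_filter, mem_univ, true_and]
  constructor
  · exact fun h => swap_le hij h
  · intro h
    have := swap_le hij h
    rwa [Equiv.swap_apply_self] at this

lemma swOp_Q_gt {i j : Fin r} (hij : j < i) (α : ℕ) :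
    ((∏ m ∈ univ.filter (· ≤ j), X m) * (∏ m, X m) ^ α : Pol r)
      - swOp i j ((∏ m ∈ univ.filter (· ≤ j), X m) * (∏ m, X m) ^ α)
      = (X j - X i) * ((∏ m ∈ univ.filter (· < j), X m) * (∏ m, X m) ^ α) := by
  have h1 : swOp i j ((∏ m, X m : Pol r) ^ α) = (∏ m, X m) ^ α := by
    show rename ⇑(Equiv.swap i j) ((∏ m, X m : Pol r) ^ α) = _
    rw [map_pow, show rename ⇑(Equiv.swap i j) (∏ m, X m : Pol r) = ∏ m, X m from swOp_P i j]
  have h2 : swOp i j (∏ m ∈ univ.filter (· ≤ j), X m : Pol r)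
      = X i * ∏ m ∈ univ.filter (· < j), X m := by
    show rename _ _ = _
    rw [rename_prod, filter_le_eq, Finset.prod_insert (by simp), Equiv.swap_apply_right]
    congr 1
    refine Finset.prod_congr rfl fun m hm => ?_
    simp only [mem_filter, mem_univ, true_and] at hm
    rw [Equiv.swap_apply_of_ne_of_ne (ne_of_lt (hm.trans hij)) (ne_of_lt hm)]
  rw [swOp_mul, h1, h2, prod_le_eq]
  ring

end DunklAux

namespace DunklAux

variable {r : ℕ}

lemma swOp_X (i j : Fin r) : swOp i j (X j : Pol r) = X i := by
  show rename _ _ = _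
  rw [rename_X, Equiv.swap_apply_right]

lemma pderiv_Q (j : Fin r) (α : ℕ) :
    pderiv j ((∏ m ∈ univ.filter (· ≤ j), X m) * (∏ m, X m) ^ α : Pol r)
      = ((α : Pol r) + 1) * ((∏ m ∈ univ.filter (· < j), X m) * (∏ m, X m) ^ α) := by
  set W : Pol r := (∏ m ∈ univ.filter (· < j), X m) * (∏ m ∈ univ.erase j, X m) ^ α with hW
  have hQW : ((∏ m ∈ univ.filter (· ≤ j), X m) * (∏ m, X m) ^ α : Pol r)
      = X j ^ (α + 1) * W := by
    rw [prod_le_eq, prod_univ_eq j, hW, mul_pow]; ring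
  have hTW : ((∏ m ∈ univ.filter (· < j), X m) * (∏ m, X m) ^ α : Pol r) = X j ^ α * W := by
    rw [prod_univ_eq j, hW, mul_pow]; ring
  have hpW : pderiv j W = 0 := by
    rw [hW, pderiv_mul, pderiv_prod_ne j _ (by simp),
      pderiv_pow_zero (pderiv_prod_ne j _ (Finset.notMem_erase j univ)) α]
    ring
  rw [hQW, hTW, pderiv_mul, hpW, pderiv_X_pow]
  ring

lemma filt1 (j : Fin r) :
    (univ.erase j).filter (fun i => j < i) = univ.filter (fun i => j < i) := by
  ext m
  simp only [mem_filter, mem_erase, mem_univ, true_and, and_true]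
  exact ⟨fun h => h.2, fun h => ⟨(ne_of_lt h).symm, h⟩⟩

lemma filt2 (j : Fin r) :
    (univ.erase j).filter (fun i => i < j) = univ.filter (fun i => i < j) := by
  ext m
  simp only [mem_filter, mem_erase, mem_univ, true_and, and_true]
  exact ⟨fun h => h.2, fun h => ⟨ne_of_lt h, h⟩⟩

lemma filt3 (j : Fin r) :
    (univ.erase j).filter (fun i => ¬ i < j) = univ.filter (fun i => j < i) := by
  ext m
  simp only [mem_filter, mem_erase, mem_univ, true_and, and_true]
  exact ⟨fun h => lt_of_le_of_ne (not_lt.1 h.2) h.1.symm, fun h => ⟨(ne_of_lt h).symm, not_lt.2 h.le⟩⟩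

lemma key {q : Fin r → Fin r → Module.End ℂ (Pol r)} (hq : DunklQuotA q)
    (a : ℂ) (α : ℕ) (j : Fin r) :
    dunklA a q j * mulOp ((∏ m ∈ univ.filter (· ≤ j), X m) * (∏ m, X m) ^ α)
      = mulOp ((∏ m ∈ univ.filter (· < j), X m) * (∏ m, X m) ^ α)
        * (cherednikA a q j + (α : ℂ) • 1) := by
  apply LinearMap.ext; intro f
  set Q : Pol r := (∏ m ∈ univ.filter (· ≤ j), X m) * (∏ m, X m) ^ α with hQdef
  set T : Pol r := (∏ m ∈ univ.filter (· < j), X m) * (∏ m, X m) ^ α with hTdef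
  have hQT : Q = X j * T := by rw [hQdef, hTdef, prod_le_eq]; ring
  have hpQ : pderiv j Q = ((α : Pol r) + 1) * T := pderiv_Q j α
  simp only [Module.End.mul_apply, mulOp_apply, dunklA, cherednikA, LinearMap.add_apply,
    LinearMap.sub_apply, LinearMap.smul_apply, LinearMap.sum_apply, Module.End.one_apply, pd,
    Derivation.coeFn_coe]
  have hsum1 : ∑ i ∈ univ.erase j, q i j (Q * f)
      = Q * (∑ i ∈ univ.erase j, q i j f)
        + T * ∑ i ∈ univ.filter (fun i => j < i), swOp i j f := by
    have step : ∀ i ∈ univ.erase j, q i j (Q * f)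
        = Q * q i j f + (if j < i then T * swOp i j f else 0) := by
      intro i hi
      have hij : i ≠ j := (Finset.mem_erase.1 hi).1
      rcases lt_or_gt_of_ne hij with h | h
      · rw [if_neg (asymm h)]
        have hg : Q - swOp i j Q = (X j - X i) * 0 := by
          rw [hQdef, swOp_Q_lt h α]; ring
        rw [q_comm hq hij hg f, zero_mul]
      · rw [if_pos h]
        exact q_comm hq hij (swOp_Q_gt h α) f
    rw [Finset.sum_congr rfl step, Finset.sum_add_distrib, ← Finset.mul_sum,
      Finset.sum_ite, Finset.sum_const_zero, add_zero, filt1, ← Finset.mul_sum]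
  have hsum2 : ∑ i ∈ univ.erase j, q i j (X j * f)
      = X j * (∑ i ∈ univ.erase j, q i j f) + ∑ i ∈ univ.erase j, swOp i j f := by
    have step2 : ∀ i ∈ univ.erase j, q i j (X j * f) = X j * q i j f + swOp i j f := by
      intro i hi
      have hij : i ≠ j := (Finset.mem_erase.1 hi).1
      have hg : (X j : Pol r) - swOp i j (X j) = (X j - X i) * 1 := by rw [swOp_X]; ring
      rw [q_comm hq hij hg f, one_mul]
    rw [Finset.sum_congr rfl step2, Finset.sum_add_distrib, ← Finset.mul_sum]
  have hsum3 : ∑ i ∈ univ.erase j, swOp i j f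
      = (∑ i ∈ univ.filter (fun i => i < j), swOp i j f)
        + ∑ i ∈ univ.filter (fun i => j < i), swOp i j f := by
    rw [← Finset.sum_filter_add_sum_filter_not (univ.erase j) (fun i => i < j), filt2, filt3]
  rw [pderiv_mul, hpQ, hsum1, pderiv_mul, pderiv_X_self, hsum2, hsum3, hQT]
  rw [MvPolynomial.smul_eq_C_mul, MvPolynomial.smul_eq_C_mul, MvPolynomial.smul_eq_C_mul,
    MvPolynomial.smul_eq_C_mul, show (C (α : ℂ) : Pol r) = (α : Pol r) from map_natCast C α]
  ring

end DunklAux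

/-- For any nonnegative integer `α`, `(∏ yⱼ)^{-α} (∏ Dⱼ) (∏ yⱼ)^{1+α} = ∏ (Uⱼ + α)`,
stated equivalently without inverting the (injective) multiplication operator as
`(∏ Dⱼ)(∏ yⱼ)^{1+α} = (∏ yⱼ)^α ∏ (Uⱼ + α)`. -/
theorem dunklA_prod_conj {r : ℕ} (a : ℂ)
    (q : Fin r → Fin r → Module.End ℂ (Pol r)) (hq : DunklQuotA q) (α : ℕ) :
    opProd (dunklA a q) * mulOp ((∏ j : Fin r, X j) ^ (α + 1))
      = mulOp ((∏ j : Fin r, X j) ^ α) *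
        opProd (fun j => cherednikA a q j + (α : ℂ) • 1) := by
  have main : ∀ k, k ≤ r →
      ((((List.finRange r).take k).map (dunklA a q)).prod
        * mulOp ((∏ m ∈ univ.filter (fun m : Fin r => (m : ℕ) < k), X m) * (∏ m : Fin r, X m) ^ α))
        * (((List.finRange r).drop k).map (fun j => cherednikA a q j + (α : ℂ) • 1)).prod
      = mulOp ((∏ j : Fin r, X j) ^ α) * opProd (fun j => cherednikA a q j + (α : ℂ) • 1) := by
    intro k
    induction k with
    | zero =>
      intro _
      simp only [List.take_zero, List.map_nil, List.prod_nil, List.drop_zero]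
      have he : univ.filter (fun m : Fin r => (m : ℕ) < 0) = ∅ := by simp
      rw [he, Finset.prod_empty, one_mul, one_mul]
      rfl
    | succ k ih =>
      intro hk1
      have hkr : k < r := hk1
      set j : Fin r := ⟨k, hkr⟩ with hj
      have htake : (List.finRange r).take (k + 1) = (List.finRange r).take k ++ [j] := by
        rw [List.take_succ, List.getElem?_eq_getElem (by simpa using hkr : k < (List.finRange r).length)]
        simp [List.getElem_finRange, Fin.cast, hj]
      have hdrop : (List.finRange r).drop k = j :: (List.finRange r).drop (k + 1) := by
        rw [List.drop_eq_getElem_cons (by simpa using hkr)]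
        simp [List.getElem_finRange, Fin.cast, hj]
      have hfilt_le : univ.filter (fun m : Fin r => (m : ℕ) < k + 1) = univ.filter (· ≤ j) := by
        ext m
        simp [Fin.le_def, Nat.lt_succ_iff, hj, -Fin.val_fin_lt, -Fin.val_fin_le]
      have hfilt_lt : univ.filter (fun m : Fin r => (m : ℕ) < k) = univ.filter (· < j) := by
        ext m
        simp [Fin.lt_def, hj, -Fin.val_fin_lt]
      specialize ih hkr.le
      rw [hdrop, List.map_cons, List.prod_cons] at ih
      rw [htake, List.map_append, List.prod_append, List.map_singleton, List.prod_singleton,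
        hfilt_le]
      rw [mul_assoc (((List.finRange r).take k).map (dunklA a q)).prod, DunklAux.key hq a α j]
      rw [hfilt_lt] at ih
      simp only [mul_assoc] at ih ⊢
      exact ih
  have h := main r le_rfl
  rw [show (List.finRange r).take r = List.finRange r from by
      simp,
    show (List.finRange r).drop r = [] from by simp,
    show univ.filter (fun m : Fin r => (m : ℕ) < r) = univ from by simp [Fin.is_lt],
    List.map_nil, List.prod_nil, mul_one] at h
  rw [show ((∏ j : Fin r, X j : Pol r)) ^ (α + 1) = (∏ m, X m) * (∏ m, X m) ^ α from pow_succ' _ _]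
  exact h
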